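/- If f: ℂ → ℂ is an exponential function, then the circulant matrix F corresponding to f satisfies F(x + y) = F(y) F(x) for all x, y ∈ ℂ. -/
import Mathlib


/-- If `f : ℂ → ℂ` is an exponential function
(`f(x+y) = f(x)f(y)`), then the circulant matrix `F` corresponding to `f`
(formed from the components `f_j(x) = (1/n) Σ_k ω^(−jk) f(ω^k x)`) satisfies
`F(x + y) = F(y) F(x)` for all `x, y ∈ ℂ`. -/
theorem circulant_of_exponential_is_multiplicative
    (n : ℕ) (hn : 2 ≤ n)
    (ω : ℂ) (hω : ω = Complex.exp (2 * Real.pi * Complex.I / n))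
    (f : ℂ → ℂ)
    (hf : ∀ x y : ℂ, f (x + y) = f x * f y)
    (comp : Fin n → ℂ → ℂ)
    (hcomp : ∀ (j : Fin n) (x : ℂ),
      comp j x = (1 / n : ℂ) * ∑ k : Fin n,
        ω ^ (-((j : ℕ) * (k : ℕ) : ℤ)) * f (ω ^ (k : ℕ) * x))
    (F : ℂ → Matrix (Fin n) (Fin n) ℂ)
    (hF : ∀ (x : ℂ) (j k : Fin n), F x j k = comp (k - j) x) :
    ∀ x y : ℂ, F (x + y) = F y * F x := by
  have hn0 : (n : ℂ) ≠ 0 := Nat.cast_ne_zero.mpr (by omega)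
  have hprim : IsPrimitiveRoot ω n := by
    rw [hω]; exact Complex.isPrimitiveRoot_exp n (by omega)
  have hω0 : ω ≠ 0 := hprim.ne_zero (by omega)
  have hωn : ω ^ (n : ℕ) = 1 := hprim.pow_eq_one
  -- zpow only depends on exponent mod n
  have hzmod : ∀ a b : ℤ, a % (n : ℤ) = b % (n : ℤ) → ω ^ a = ω ^ b := by
    intro a b h
    have h1 : ∀ c : ℤ, ω ^ c = ω ^ (c % (n : ℤ)) := by
      intro c
      conv_lhs => rw [← Int.mul_ediv_add_emod c n]
      rw [zpow_add₀ hω0, mul_comm (n : ℤ), zpow_mul, zpow_natCast]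
      have h2 : (ω ^ (c / (n : ℤ))) ^ n = 1 := by
        rw [← zpow_natCast, ← zpow_mul, mul_comm, zpow_mul, zpow_natCast, hωn, one_zpow]
      rw [h2, one_mul]
    rw [h1 a, h1 b, h]
  -- value of Fin subtraction mod n
  have hfin : ∀ a b : Fin n, (((a - b : Fin n) : ℕ) : ℤ) % (n : ℤ) = ((a : ℤ) - (b : ℤ)) % (n : ℤ) := by
    intro a b
    rw [Fin.sub_def]
    push_cast [Nat.cast_sub b.isLt.le]
    rw [Int.emod_emod_of_dvd _ dvd_rfl]
    have h3 : (n : ℤ) - (b : ℤ) + (a : ℤ) = (a : ℤ) - (b : ℤ) + (n : ℤ) * 1 := by ring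
    rw [h3, Int.add_mul_emod_self_left]
  -- geometric sum of roots of unity
  have hsum : ∀ c : ℤ, ∑ l : Fin n, ω ^ (((l : ℕ) : ℤ) * c)
      = if (n : ℤ) ∣ c then (n : ℂ) else 0 := by
    intro c
    have hterm : ∀ l : Fin n, ω ^ (((l : ℕ) : ℤ) * c) = (ω ^ c) ^ (l : ℕ) := by
      intro l; rw [mul_comm, zpow_mul, zpow_natCast]
    simp only [hterm]
    by_cases hd : (n : ℤ) ∣ c
    · obtain ⟨k, rfl⟩ := hd
      have h4 : ω ^ ((n : ℤ) * k) = 1 := by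
        rw [zpow_mul, zpow_natCast, hωn, one_zpow]
      simp [h4]
    · have hne : ω ^ c ≠ 1 := by
        rw [Ne, hprim.zpow_eq_one_iff_dvd]; exact_mod_cast hd
      have hpow : (ω ^ c) ^ n = 1 := by
        rw [← zpow_natCast, ← zpow_mul, mul_comm, zpow_mul, zpow_natCast, hωn, one_zpow]
      rw [if_neg hd, Fin.sum_univ_eq_sum_range, geom_sum_eq hne, hpow, sub_self, zero_div]
  have hdvd : ∀ a b : Fin n, ((n : ℤ) ∣ ((b : ℤ) - (a : ℤ))) ↔ b = a := by
    intro a b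
    constructor
    · intro h
      have h5 : ((b : ℤ) - (a : ℤ)) = 0 := by
        refine Int.eq_zero_of_abs_lt_dvd h ?_
        have := a.isLt; have := b.isLt
        rw [abs_lt]; omega
      have : (b : ℤ) = (a : ℤ) := by omega
      exact Fin.ext (by exact_mod_cast this)
    · rintro rfl; simp
  intro x y
  -- the convolution identity
  have conv : ∀ d : Fin n, (∑ m : Fin n, comp m y * comp (d - m) x) = comp d (x + y) := by
    intro d
    have hinner : ∀ a b : Fin n,
        (∑ m : Fin n, ω ^ (-((m : ℕ) * (a : ℕ) : ℤ)) * ω ^ (-(((d - m : Fin n) : ℕ) * (b : ℕ) : ℤ)))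
        = ω ^ (-((d : ℕ) * (b : ℕ) : ℤ)) * (if (n : ℤ) ∣ ((b : ℤ) - (a : ℤ)) then (n : ℂ) else 0) := by
      intro a b
      have hterm2 : ∀ m : Fin n,
          ω ^ (-((m : ℕ) * (a : ℕ) : ℤ)) * ω ^ (-(((d - m : Fin n) : ℕ) * (b : ℕ) : ℤ))
          = ω ^ (-((d : ℕ) * (b : ℕ) : ℤ)) * ω ^ (((m : ℕ) : ℤ) * ((b : ℤ) - (a : ℤ))) := by
        intro m
        rw [← zpow_add₀ hω0, ← zpow_add₀ hω0]
        apply hzmod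
        have h1 : ((((d - m : Fin n) : ℕ) : ℤ)) * (b : ℤ) % (n : ℤ)
            = (((d : ℤ) - (m : ℤ)) * (b : ℤ)) % (n : ℤ) :=
          Int.ModEq.mul_right (b : ℤ) (hfin d m)
        have h2 : (-((m : ℕ) * (a : ℕ) : ℤ) + -(((d - m : Fin n) : ℕ) * (b : ℕ) : ℤ)) % (n : ℤ)
            = (-((m : ℤ) * (a : ℤ)) + -(((d : ℤ) - (m : ℤ)) * (b : ℤ))) % (n : ℤ) :=
          Int.ModEq.add (Int.ModEq.refl _) (Int.ModEq.neg h1)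
        rw [h2]
        congr 1
        ring
      simp only [hterm2]
      rw [← Finset.mul_sum, hsum]
    have e1 : ∀ m : Fin n, comp m y * comp (d - m) x
        = ∑ a : Fin n, ∑ b : Fin n, (1 / n : ℂ) * (1 / n : ℂ) *
          ((ω ^ (-((m : ℕ) * (a : ℕ) : ℤ)) * ω ^ (-(((d - m : Fin n) : ℕ) * (b : ℕ) : ℤ))) *
           (f (ω ^ (a : ℕ) * y) * f (ω ^ (b : ℕ) * x))) := by
      intro m
      rw [hcomp, hcomp, mul_mul_mul_comm, Finset.sum_mul_sum, Finset.mul_sum]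
      refine Finset.sum_congr rfl fun a _ => ?_
      rw [Finset.mul_sum]
      exact Finset.sum_congr rfl fun b _ => by ring
    calc ∑ m : Fin n, comp m y * comp (d - m) x
        = ∑ m : Fin n, ∑ a : Fin n, ∑ b : Fin n, (1 / n : ℂ) * (1 / n : ℂ) *
          ((ω ^ (-((m : ℕ) * (a : ℕ) : ℤ)) * ω ^ (-(((d - m : Fin n) : ℕ) * (b : ℕ) : ℤ))) *
           (f (ω ^ (a : ℕ) * y) * f (ω ^ (b : ℕ) * x))) :=
          Finset.sum_congr rfl fun m _ => e1 m
      _ = ∑ a : Fin n, ∑ b : Fin n, ∑ m : Fin n, (1 / n : ℂ) * (1 / n : ℂ) *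
          ((ω ^ (-((m : ℕ) * (a : ℕ) : ℤ)) * ω ^ (-(((d - m : Fin n) : ℕ) * (b : ℕ) : ℤ))) *
           (f (ω ^ (a : ℕ) * y) * f (ω ^ (b : ℕ) * x))) := by
          rw [Finset.sum_comm]
          exact Finset.sum_congr rfl fun a _ => Finset.sum_comm
      _ = ∑ a : Fin n, ∑ b : Fin n, (1 / n : ℂ) * (1 / n : ℂ) *
          ((∑ m : Fin n, ω ^ (-((m : ℕ) * (a : ℕ) : ℤ)) * ω ^ (-(((d - m : Fin n) : ℕ) * (b : ℕ) : ℤ))) *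
           (f (ω ^ (a : ℕ) * y) * f (ω ^ (b : ℕ) * x))) := by
          refine Finset.sum_congr rfl fun a _ => Finset.sum_congr rfl fun b _ => ?_
          rw [Finset.sum_mul, Finset.mul_sum]
      _ = ∑ a : Fin n, (1 / n : ℂ) *
            (ω ^ (-((d : ℕ) * (a : ℕ) : ℤ)) * f (ω ^ (a : ℕ) * (x + y))) := by
          refine Finset.sum_congr rfl fun a _ => ?_
          simp only [hinner]
          have hcollapse : ∀ b : Fin n,
              (1 / n : ℂ) * (1 / n : ℂ) *
              ((ω ^ (-((d : ℕ) * (b : ℕ) : ℤ)) * (if (n : ℤ) ∣ ((b : ℤ) - (a : ℤ)) then (n : ℂ) else 0)) *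
               (f (ω ^ (a : ℕ) * y) * f (ω ^ (b : ℕ) * x)))
              = if b = a then (1 / n : ℂ) *
                  (ω ^ (-((d : ℕ) * (a : ℕ) : ℤ)) * f (ω ^ (a : ℕ) * (x + y))) else 0 := by
            intro b
            by_cases hba : b = a
            · subst hba
              rw [if_pos ((hdvd b b).mpr rfl), if_pos rfl]
              have hff : f (ω ^ (b : ℕ) * y) * f (ω ^ (b : ℕ) * x)
                  = f (ω ^ (b : ℕ) * (x + y)) := by
                rw [mul_add, hf]; ring
              rw [hff]
              have hfact : (1 / (n : ℂ)) * (1 / (n : ℂ)) *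
                  ((ω ^ (-((d : ℕ) * (b : ℕ) : ℤ)) * (n : ℂ)) * f (ω ^ (b : ℕ) * (x + y)))
                  = ((1 / (n : ℂ)) * (n : ℂ)) * ((1 / (n : ℂ)) *
                    (ω ^ (-((d : ℕ) * (b : ℕ) : ℤ)) * f (ω ^ (b : ℕ) * (x + y)))) := by ring
              rw [hfact, one_div, inv_mul_cancel₀ hn0, one_mul]
            · rw [if_neg (fun h => hba ((hdvd a b).mp h)), if_neg hba]
              ring
          simp only [hcollapse]
          rw [Finset.sum_ite_eq' Finset.univ a]
          simp
      _ = comp d (x + y) := by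
          rw [hcomp, Finset.mul_sum]
  haveI : NeZero n := ⟨by omega⟩
  ext j k
  rw [Matrix.mul_apply]
  simp only [hF]
  rw [← conv (k - j)]
  refine Fintype.sum_equiv (Equiv.addRight j) _ _ fun l => ?_
  simp only [Equiv.coe_addRight]
  rw [add_sub_cancel_right, sub_add_eq_sub_sub_swap]
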